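/- arXiv:1212.0021 — 2 statements merged into one kernel-verified Lean document; each statement's English description precedes it below -/
import Mathlib

section
/- For every positive integer n, the following three k-subspaces of kG coincide: the k-span of {x·a : x ∈ Rⁿ, a ∈ kG}, the k-span of {a·x : a ∈ kG, x ∈ Rⁿ} (where Rⁿ is the image in kG of the n-th power of the Jacobson radical of kN), and the n-th power Iⁿ of the two-sided ideal I of kG generated by R. In particular, conjugation by any element g of G maps R onto itself. -/
/-!
STATEMENT 0. `k` a field, `G` a finite group, `N ⊴ G`.  `R` is the image in `kG` of the
Jacobson radical of `kN`, `I` the two-sided ideal of `kG` generated by `R`.  For every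
`n ≥ 1`, the `k`-span of `{x * a : x ∈ Rⁿ, a ∈ kG}`, the `k`-span of
`{a * x : a ∈ kG, x ∈ Rⁿ}` (with `Rⁿ` the image of the `n`-th power of the Jacobson radical
of `kN`) and the `n`-th power `Iⁿ` all coincide; in particular conjugation by any `g ∈ G`
maps `R` onto itself.
-/

open Submodule

noncomputable section

variable (k : Type) [Field k] (G : Type) [Group G] [Fintype G] (N : Subgroup G) [N.Normal]

/-- The algebra map `kN →ₐ[k] kG` induced by the inclusion `N ↪ G`. -/
def incl : MonoidAlgebra k ↥N →ₐ[k] MonoidAlgebra k G :=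
  MonoidAlgebra.mapDomainAlgHom k k N.subtype

/-- The Jacobson radical `J` of `kN`, viewed as a `k`-submodule of `kN`. -/
def Jrad : Submodule k (MonoidAlgebra k ↥N) :=
  ((⊥ : Ideal (MonoidAlgebra k ↥N)).jacobson).restrictScalars k

/-- The image in `kG` of the `n`-th power of the Jacobson radical of `kN`. -/
def Rpow (n : ℕ) : Submodule k (MonoidAlgebra k G) :=
  Submodule.map (incl k G N).toLinearMap (Jrad k G N ^ n)

/-- `R`, the image in `kG` of the Jacobson radical of `kN`. -/
def Rimg : Submodule k (MonoidAlgebra k G) := Rpow k G N 1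

/-- `I`, the two-sided ideal of `kG` generated by `R` (as a `k`-submodule this is
`kG * R * kG`, the smallest two-sided ideal containing `R`). -/
def Igen : Submodule k (MonoidAlgebra k G) :=
  (⊤ : Submodule k (MonoidAlgebra k G)) * Rimg k G N * (⊤ : Submodule k (MonoidAlgebra k G))


/-- Any ring isomorphism maps the Jacobson radical into the Jacobson radical. -/
lemma jac_map {R S : Type*} [Ring R] [Ring S] (e : R ≃+* S) {x : R}
    (hx : x ∈ Ideal.jacobson (⊥ : Ideal R)) : e x ∈ Ideal.jacobson (⊥ : Ideal S) := by
  have h := Ideal.map_jacobson_of_bijective (f := (e : R →+* S)) e.bijective (I := ⊥)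
  rw [Ideal.map_bot] at h
  rw [← h]
  exact Ideal.mem_map_of_mem _ hx

/-- Conjugation on `kG` is compatible with the automorphism of `kN` induced by `conjNormal`. -/
lemma conj_incl (g : G) (x : MonoidAlgebra k ↥N) :
    MonoidAlgebra.of k G g * incl k G N x * MonoidAlgebra.of k G g⁻¹
      = incl k G N (MonoidAlgebra.domCongr k k (MulAut.conjNormal g : ↥N ≃* ↥N) x) := by
  induction x using MonoidAlgebra.induction_linear with
  | zero => simp
  | add f h hf hh =>
      simp only [map_add, mul_add, add_mul] at *
      rw [hf, hh]
  | single n b =>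
      simp only [incl, MonoidAlgebra.mapDomainAlgHom_apply, MonoidAlgebra.mapDomain_single,
        MonoidAlgebra.domCongr_single, MonoidAlgebra.of_apply,
        MonoidAlgebra.single_mul_single, one_mul, mul_one]
      congr 1

lemma domCongr_Jrad (g : G) :
    Submodule.map (MonoidAlgebra.domCongr k k (MulAut.conjNormal g : ↥N ≃* ↥N)).toLinearMap
      (Jrad k G N) = Jrad k G N := by
  set e := MonoidAlgebra.domCongr k k (MulAut.conjNormal g : ↥N ≃* ↥N)
  apply le_antisymm
  · rintro _ ⟨x, hx, rfl⟩
    exact jac_map e.toRingEquiv hx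
  · intro x hx
    refine ⟨e.symm x, jac_map e.symm.toRingEquiv hx, ?_⟩
    simp
lemma conj_image (g : G) :
    (fun x : MonoidAlgebra k G =>
        MonoidAlgebra.of k G g * x * MonoidAlgebra.of k G g⁻¹) ''
      (Rimg k G N : Set (MonoidAlgebra k G)) = (Rimg k G N : Set (MonoidAlgebra k G)) := by
  have hR : Rimg k G N = Submodule.map (incl k G N).toLinearMap (Jrad k G N) := by
    rw [Rimg, Rpow, pow_one]
  rw [hR, Submodule.map_coe, Set.image_image]
  have : (fun x => MonoidAlgebra.of k G g * (incl k G N).toLinearMap x *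
      MonoidAlgebra.of k G g⁻¹) = fun x => (incl k G N).toLinearMap
        ((MonoidAlgebra.domCongr k k (MulAut.conjNormal g : ↥N ≃* ↥N)).toLinearMap x) := by
    funext x
    exact conj_incl k G N g x
  rw [this, ← Set.image_image, ← Submodule.map_coe
    (MonoidAlgebra.domCongr k k (MulAut.conjNormal g : ↥N ≃* ↥N)).toLinearMap,
    domCongr_Jrad k G N g]

lemma conj_mem (g : G) {s : MonoidAlgebra k G} (hs : s ∈ Rimg k G N) :
    MonoidAlgebra.of k G g * s * MonoidAlgebra.of k G g⁻¹ ∈ Rimg k G N := by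
  have := conj_image k G N g
  rw [← SetLike.mem_coe, ← this]
  exact ⟨s, hs, rfl⟩

lemma htop : (⊤ : Submodule k (MonoidAlgebra k G))
    = ⨆ g : G, span k {MonoidAlgebra.of k G g} := by
  rw [← Submodule.span_iUnion]
  have h1 : (⋃ g, ({MonoidAlgebra.of k G g} : Set (MonoidAlgebra k G)))
      = Set.range (MonoidAlgebra.of k G) := by
    ext y; simp [eq_comm]
  rw [h1]
  have := (MonoidAlgebra.basis G k).span_eq
  have h2 : ⇑(MonoidAlgebra.basis G k) = MonoidAlgebra.of k G := by
    funext g; simp [MonoidAlgebra.of_apply]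
  rw [h2] at this
  exact this.symm

lemma hTS : (⊤ : Submodule k (MonoidAlgebra k G)) * Rimg k G N
    = Rimg k G N * (⊤ : Submodule k (MonoidAlgebra k G)) := by
  apply le_antisymm
  · conv_lhs => rw [htop k G]
    rw [Submodule.iSup_mul]
    apply iSup_le
    intro g
    apply Submodule.mul_le.2
    intro m hm s hs
    obtain ⟨c, rfl⟩ := Submodule.mem_span_singleton.1 hm
    have key : (c • MonoidAlgebra.of k G g) * s
        = c • ((MonoidAlgebra.of k G g * s * MonoidAlgebra.of k G g⁻¹) *
            MonoidAlgebra.of k G g) := by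
      rw [smul_mul_assoc]
      congr 1
      rw [mul_assoc, mul_assoc, ← map_mul, inv_mul_cancel, map_one, mul_one]
    rw [key]
    exact Submodule.smul_mem _ c
      (Submodule.mul_mem_mul (conj_mem k G N g hs) Submodule.mem_top)
  · conv_lhs => rw [htop k G]
    rw [Submodule.mul_iSup]
    apply iSup_le
    intro g
    apply Submodule.mul_le.2
    intro s hs m hm
    obtain ⟨c, rfl⟩ := Submodule.mem_span_singleton.1 hm
    have hconj : MonoidAlgebra.of k G g⁻¹ * s * MonoidAlgebra.of k G g ∈ Rimg k G N := by
      have := conj_mem k G N g⁻¹ hs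
      rwa [inv_inv] at this
    have key : s * (c • MonoidAlgebra.of k G g)
        = c • (MonoidAlgebra.of k G g *
            (MonoidAlgebra.of k G g⁻¹ * s * MonoidAlgebra.of k G g)) := by
      rw [mul_smul_comm]
      congr 1
      rw [← mul_assoc, ← mul_assoc, ← map_mul, mul_inv_cancel, map_one, one_mul]
    rw [key]
    exact Submodule.smul_mem _ c
      (Submodule.mul_mem_mul Submodule.mem_top hconj)

lemma htt : (⊤ : Submodule k (MonoidAlgebra k G)) * ⊤ = ⊤ := by
  apply le_antisymm le_top
  intro x _
  rw [← mul_one x]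
  exact Submodule.mul_mem_mul Submodule.mem_top Submodule.mem_top

lemma hTSn (m : ℕ) : (⊤ : Submodule k (MonoidAlgebra k G)) * Rimg k G N ^ m
    = Rimg k G N ^ m * (⊤ : Submodule k (MonoidAlgebra k G)) := by
  induction m with
  | zero => rw [pow_zero, Submodule.mul_one, Submodule.one_mul]
  | succ m ih =>
      rw [pow_succ, ← mul_assoc, ih, mul_assoc, hTS k G N, ← mul_assoc, mul_assoc]

lemma hRp (m : ℕ) : Rpow k G N m = Rimg k G N ^ m := by
  rw [Rpow, Submodule.map_pow]
  congr 1
  rw [Rimg, Rpow, pow_one]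

lemma hIg : Igen k G N = Rimg k G N * ⊤ := by
  rw [Igen, hTS k G N, mul_assoc, htt k G]

lemma hIgn (m : ℕ) : Igen k G N ^ (m + 1) = Rimg k G N ^ (m + 1) * ⊤ := by
  induction m with
  | zero => rw [pow_one, pow_one, hIg]
  | succ m ih =>
      rw [pow_succ, ih, hIg k G N, mul_assoc, ← mul_assoc (⊤ : Submodule k (MonoidAlgebra k G)),
        hTS k G N, mul_assoc, htt k G, ← mul_assoc, ← pow_succ]

lemma hsp1 (M : Submodule k (MonoidAlgebra k G)) :
    span k {y : MonoidAlgebra k G | ∃ x ∈ M, ∃ a : MonoidAlgebra k G, y = x * a}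
      = M * ⊤ := by
  apply le_antisymm
  · rw [span_le]
    rintro y ⟨x, hx, a, rfl⟩
    exact Submodule.mul_mem_mul hx Submodule.mem_top
  · exact Submodule.mul_le.2 fun x hx a _ => subset_span ⟨x, hx, a, rfl⟩

lemma hsp2 (M : Submodule k (MonoidAlgebra k G)) :
    span k {y : MonoidAlgebra k G | ∃ a : MonoidAlgebra k G, ∃ x ∈ M, y = a * x}
      = ⊤ * M := by
  apply le_antisymm
  · rw [span_le]
    rintro y ⟨a, x, hx, rfl⟩
    exact Submodule.mul_mem_mul Submodule.mem_top hx
  · exact Submodule.mul_le.2 fun a _ x hx => subset_span ⟨a, x, hx, rfl⟩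

theorem stmt0 (n : ℕ) (hn : 0 < n) :
    (span k {y : MonoidAlgebra k G |
        ∃ x ∈ Rpow k G N n, ∃ a : MonoidAlgebra k G, y = x * a} =
      span k {y : MonoidAlgebra k G |
        ∃ a : MonoidAlgebra k G, ∃ x ∈ Rpow k G N n, y = a * x}) ∧
    (span k {y : MonoidAlgebra k G |
        ∃ x ∈ Rpow k G N n, ∃ a : MonoidAlgebra k G, y = x * a} = Igen k G N ^ n) ∧
    (∀ g : G,
      (fun x : MonoidAlgebra k G =>
          MonoidAlgebra.of k G g * x * MonoidAlgebra.of k G g⁻¹) ''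
        (Rimg k G N : Set (MonoidAlgebra k G)) = (Rimg k G N : Set (MonoidAlgebra k G))) := by
  obtain ⟨m, rfl⟩ : ∃ m, n = m + 1 := ⟨n - 1, (Nat.succ_pred_eq_of_pos hn).symm⟩
  refine ⟨?_, ?_, conj_image k G N⟩
  · rw [hsp1, hsp2, hRp, hTSn k G N]
  · rw [hsp1, hRp, hIgn k G N]

end
end

section
/- The two-sided ideal I of kG generated by the image R of the Jacobson radical of kN is a nilpotent ideal (some power Iᵐ is zero), and consequently I is contained in the Jacobson radical of kG. -/
/-!
STATEMENT 1. `k` a field, `G` a finite group, `N ⊴ G`.  The two-sided ideal `I` of `kG`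
generated by the image `R` of the Jacobson radical of `kN` is nilpotent (some power `Iᵐ`
is zero), and consequently `I` is contained in the Jacobson radical of `kG`.
-/

noncomputable section

variable (k : Type) [Field k] (G : Type) [Group G] [Fintype G] (N : Subgroup G) [N.Normal]

section ArtinianJacobsonAux

variable {A : Type*} [Ring A]

lemma jac_bot_mul_mem {x : A} (hx : x ∈ Ideal.jacobson (⊥ : Ideal A)) (y : A) :
    x * y ∈ Ideal.jacobson (⊥ : Ideal A) :=
  Ideal.mul_mem_right y _ hx

lemma pow_mul_mem {J : Ideal A} (hJ : ∀ x ∈ J, ∀ y : A, x * y ∈ J) (m : ℕ)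
    {x : A} (hx : x ∈ J ^ m) (y : A) : x * y ∈ J ^ m := by
  induction m with
  | zero => rw [Submodule.pow_zero, Ideal.one_eq_top] at hx ⊢; trivial
  | succ m ih =>
    rw [Submodule.pow_succ] at hx ⊢
    refine Submodule.mul_induction_on hx (fun a ha b hb => ?_) (fun x1 x2 h1 h2 => ?_)
    · rw [mul_assoc]; exact Ideal.mul_mem_mul ha (hJ b hb y)
    · rw [add_mul]; exact add_mem h1 h2

lemma idem_eq_bot [IsArtinian A A] (K : Ideal A) (hK2 : K * K = K)
    (hKr : ∀ x ∈ K, ∀ y : A, x * y ∈ K)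
    (hKJ : K ≤ Ideal.jacobson ⊥) : K = ⊥ := by
  by_contra hbot
  obtain ⟨L, hLS, hLmin⟩ := IsArtinian.set_has_minimal {L : Ideal A | K * L ≠ ⊥}
    ⟨K, by rw [Set.mem_setOf_eq, hK2]; exact hbot⟩
  rw [Set.mem_setOf_eq] at hLS
  have hex : ∃ a ∈ L, K * Ideal.span {a} ≠ ⊥ := by
    by_contra h
    push_neg at h
    apply hLS
    rw [eq_bot_iff]
    refine Submodule.mul_le.mpr fun c hc x hx => ?_
    have hm : c * x ∈ K * Ideal.span {x} := Ideal.mul_mem_mul hc (Ideal.subset_span rfl)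
    rw [h x hx] at hm
    simpa using hm
  obtain ⟨a, haL, ha⟩ := hex
  have hL'S : K * (K * Ideal.span {a}) ≠ ⊥ := by rw [← mul_assoc, hK2]; exact ha
  have hL'le : K * Ideal.span {a} ≤ L :=
    le_trans (Ideal.mul_mono_right (Ideal.span_le.mpr (by simpa using haL))) Ideal.mul_le_right
  have hEq : K * Ideal.span {a} = L := by
    rcases lt_or_eq_of_le hL'le with h | h
    · exact absurd h (hLmin _ hL'S)
    · exact h
  have haK : a ∈ K * Ideal.span {a} := hEq ▸ haL
  have hca : ∃ c ∈ K, c * a = a := by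
    have hle : K * Ideal.span {a} ≤ Submodule.map (LinearMap.toSpanSingleton A A a) K := by
      refine Submodule.mul_le.mpr fun c hc s hs => ?_
      obtain ⟨r, rfl⟩ := Submodule.mem_span_singleton.mp hs
      rw [smul_eq_mul]
      exact ⟨c * r, hKr c hc r, by
        simp [LinearMap.toSpanSingleton_apply, smul_eq_mul, mul_assoc]⟩
    obtain ⟨c, hc, hca⟩ := hle haK
    exact ⟨c, hc, by simpa [LinearMap.toSpanSingleton_apply, smul_eq_mul] using hca⟩
  obtain ⟨c, hcK, hca⟩ := hca
  obtain ⟨z, hz⟩ := Ideal.mem_jacobson_iff.mp (hKJ hcK) (-1)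
  rw [Ideal.mem_bot] at hz
  have hz1 : z * (1 - c) = 1 := by
    have h0 : -(z * c) + z = 1 := by
      have := sub_eq_zero.mp hz
      rw [mul_neg_one, neg_mul] at this
      exact this
    rw [mul_sub, mul_one, sub_eq_neg_add]
    exact h0
  have ha0 : a = 0 := by
    have h1 : (1 - c) * a = 0 := by rw [sub_mul, one_mul, hca, sub_self]
    calc a = 1 * a := (one_mul a).symm
    _ = z * (1 - c) * a := by rw [hz1]
    _ = z * ((1 - c) * a) := mul_assoc _ _ _
    _ = 0 := by rw [h1, mul_zero]
  apply ha
  rw [ha0, Ideal.span_singleton_eq_bot.mpr rfl, Ideal.mul_bot]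

lemma jac_nilpotent [IsArtinian A A] :
    ∃ n : ℕ, 0 < n ∧ (Ideal.jacobson (⊥ : Ideal A)) ^ n = ⊥ := by
  set J := Ideal.jacobson (⊥ : Ideal A) with hJ
  obtain ⟨n, hn⟩ := IsArtinian.monotone_stabilizes
    (⟨fun n => OrderDual.toDual (J ^ n), fun i j h => Ideal.pow_le_pow_right h⟩ : ℕ →o (Ideal A)ᵒᵈ)
  refine ⟨n + 1, Nat.succ_pos n, ?_⟩
  have hstab : ∀ m, n ≤ m → J ^ n = J ^ m := fun m hm => hn m hm
  have hpadd : ∀ a b : ℕ, J ^ a * J ^ (b+1) = J ^ (a + (b+1)) := by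
    intro a b
    induction b with
    | zero => rw [Submodule.pow_one]; rfl
    | succ b ih =>
      calc J ^ a * J ^ (b+2) = J ^ a * (J ^ (b+1) * J) := rfl
      _ = (J ^ a * J ^ (b+1)) * J := Ideal.mul_assoc.symm
      _ = J ^ (a+(b+1)) * J := by rw [ih]
      _ = J ^ (a+(b+2)) := rfl
  have hK2 : J ^ (n+1) * J ^ (n+1) = J ^ (n+1) := by
    rw [hpadd, ← hstab (n+1+(n+1)) (by omega), hstab (n+1) (by omega)]
  exact idem_eq_bot _ hK2
    (fun x hx y => pow_mul_mem (fun x hx y => jac_bot_mul_mem hx y) _ hx y)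
    (hJ ▸ Ideal.pow_le_self (Nat.succ_ne_zero n))

end ArtinianJacobsonAux


lemma incl_conj (g : G) (a : MonoidAlgebra k ↥N) :
    MonoidAlgebra.single (g⁻¹ : G) (1:k) * incl k G N a * MonoidAlgebra.single g 1
      = incl k G N (MonoidAlgebra.domCongr k k
          (MulAut.conjNormal (g⁻¹ : G) : ↥N ≃* ↥N) a) := by
  induction a using MonoidAlgebra.induction_on with
  | of n =>
    simp only [MonoidAlgebra.of_apply, incl, MonoidAlgebra.domCongr_single,
      MonoidAlgebra.mapDomainAlgHom_apply, Finsupp.mapDomain_single,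
      MonoidAlgebra.single_mul_single, one_mul, mul_one]
    congr 1
    simp [MulAut.conjNormal_apply, mul_assoc]
  | add f1 f2 h1 h2 =>
    simp only [map_add, mul_add, add_mul, h1, h2]
  | smul r f h =>
    simp only [map_smul, smul_mul_assoc, mul_smul_comm, h]

lemma conj_mem_Rimg (g : G) {r : MonoidAlgebra k G} (hr : r ∈ Rimg k G N) :
    MonoidAlgebra.single (g⁻¹ : G) (1:k) * r * MonoidAlgebra.single g 1 ∈ Rimg k G N := by
  obtain ⟨a, ha, rfl⟩ := hr
  rw [pow_one] at ha
  rw [AlgHom.toLinearMap_apply, incl_conj]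
  refine ⟨_, ?_, rfl⟩
  rw [pow_one]
  have ha' : a ∈ (⊥ : Ideal (MonoidAlgebra k ↥N)).jacobson := ha
  set e := (MonoidAlgebra.domCongr k k (MulAut.conjNormal (g⁻¹:G) : ↥N ≃* ↥N)) with he
  have hmap := Ideal.map_jacobson_of_bijective
    (f := (e.toRingEquiv : MonoidAlgebra k ↥N →+* MonoidAlgebra k ↥N))
    (I := (⊥ : Ideal (MonoidAlgebra k ↥N))) e.toRingEquiv.bijective
  rw [Ideal.map_bot] at hmap
  show e a ∈ ((⊥ : Ideal (MonoidAlgebra k ↥N)).jacobson).restrictScalars k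
  have hmem : (e.toRingEquiv : MonoidAlgebra k ↥N →+* MonoidAlgebra k ↥N) a ∈
      Ideal.map (e.toRingEquiv : MonoidAlgebra k ↥N →+* MonoidAlgebra k ↥N)
        ((⊥ : Ideal (MonoidAlgebra k ↥N)).jacobson) :=
    Ideal.mem_map_of_mem _ ha'
  rw [hmap] at hmem
  exact hmem

lemma Rimg_mul_top :
    Rimg k G N * (⊤ : Submodule k (MonoidAlgebra k G)) ≤ ⊤ * Rimg k G N := by
  refine Submodule.mul_le.mpr fun r hr x _ => ?_
  induction x using MonoidAlgebra.induction_on with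
  | of g =>
    have h2 : r * MonoidAlgebra.of k G g
        = MonoidAlgebra.single g 1 *
          (MonoidAlgebra.single (g⁻¹ : G) (1:k) * r * MonoidAlgebra.single g 1) := by
      rw [← mul_assoc, ← mul_assoc, MonoidAlgebra.single_mul_single, mul_inv_cancel,
        one_mul, MonoidAlgebra.of_apply]
      rw [show MonoidAlgebra.single (1 : G) (1:k) = 1 from rfl, one_mul]
    rw [h2]
    exact Submodule.mul_mem_mul Submodule.mem_top (conj_mem_Rimg k G N g hr)
  | add f1 f2 h1 h2 =>
    rw [mul_add]; exact add_mem (h1 Submodule.mem_top) (h2 Submodule.mem_top)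
  | smul c f h =>
    rw [mul_smul_comm]; exact Submodule.smul_mem _ _ (h Submodule.mem_top)

section PowComm

variable {k' B : Type*} [CommSemiring k'] [Semiring B] [Algebra k' B]

lemma top_mul_top : (⊤ : Submodule k' B) * ⊤ = ⊤ := by
  apply le_antisymm le_top
  intro x _
  have := Submodule.mul_mem_mul (M := (⊤ : Submodule k' B)) (N := (⊤ : Submodule k' B))
    (Submodule.mem_top (x := x)) (Submodule.mem_top (x := (1:B)))
  simpa using this

lemma pow_comm_aux {R : Submodule k' B} (h : R * ⊤ ≤ ⊤ * R) (n : ℕ) :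
    R ^ n * ⊤ ≤ ⊤ * R ^ n := by
  induction n with
  | zero => rw [pow_zero, Submodule.one_mul, Submodule.mul_one]
  | succ n ih =>
    calc R ^ (n+1) * ⊤ = R ^ n * (R * ⊤) := by rw [pow_succ, mul_assoc]
    _ ≤ R ^ n * (⊤ * R) := mul_le_mul' le_rfl h
    _ = (R ^ n * ⊤) * R := by rw [mul_assoc]
    _ ≤ (⊤ * R ^ n) * R := mul_le_mul' ih le_rfl
    _ = ⊤ * R ^ (n+1) := by rw [mul_assoc, ← pow_succ]

lemma TRT_pow {R : Submodule k' B} (h : R * ⊤ ≤ ⊤ * R) (n : ℕ) :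
    (⊤ * R * ⊤) ^ (n+1) ≤ ⊤ * R ^ (n+1) * ⊤ := by
  induction n with
  | zero => rw [pow_one, pow_one]
  | succ n ih =>
    have key : (⊤ * R ^ (n+1) * ⊤) * (⊤ * R * ⊤) ≤ ⊤ * R ^ (n+2) * ⊤ := by
      have e1 : (⊤ * R ^ (n+1) * ⊤) * (⊤ * R * ⊤)
          = ((⊤ * R ^ (n+1)) * (⊤ * R)) * ⊤ := by
        rw [mul_assoc (⊤ * R ^ (n+1)) ⊤ (⊤ * R * ⊤)]
        rw [show (⊤ : Submodule k' B) * (⊤ * R * ⊤) = (⊤ * R) * ⊤ by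
          rw [mul_assoc ⊤ R ⊤, ← mul_assoc ⊤ ⊤ (R * ⊤), top_mul_top]]
        rw [← mul_assoc (⊤ * R ^ (n+1)) (⊤ * R) ⊤]
      have e2 : (⊤ * R ^ (n+1)) * (⊤ * R) ≤ ⊤ * R ^ (n+2) := by
        calc (⊤ * R ^ (n+1)) * (⊤ * R) = ⊤ * ((R ^ (n+1) * ⊤) * R) := by
              rw [mul_assoc, mul_assoc]
        _ ≤ ⊤ * ((⊤ * R ^ (n+1)) * R) :=
              mul_le_mul' le_rfl (mul_le_mul' (pow_comm_aux h (n+1)) le_rfl)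
        _ = (⊤ * ⊤) * (R ^ (n+1) * R) := by rw [mul_assoc, mul_assoc]
        _ = ⊤ * R ^ (n+2) := by rw [top_mul_top, ← pow_succ]
      rw [e1]
      exact mul_le_mul' e2 le_rfl
    calc (⊤ * R * ⊤) ^ (n+2) = (⊤ * R * ⊤) ^ (n+1) * (⊤ * R * ⊤) := pow_succ _ _
    _ ≤ (⊤ * R ^ (n+1) * ⊤) * (⊤ * R * ⊤) := mul_le_mul' ih le_rfl
    _ ≤ ⊤ * R ^ (n+2) * ⊤ := key

end PowComm

lemma Jrad_pow (n : ℕ) : Jrad k G N ^ (n+1)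
    = (((⊥ : Ideal (MonoidAlgebra k ↥N)).jacobson ^ (n+1)).restrictScalars k) := by
  induction n with
  | zero => rw [pow_one, Submodule.pow_one]; rfl
  | succ n ih =>
    rw [pow_succ, ih, Submodule.pow_succ, Submodule.restrictScalars_mul]
    rfl

theorem stmt1 :
    (∃ m : ℕ, Igen k G N ^ m = (⊥ : Submodule k (MonoidAlgebra k G))) ∧
    Igen k G N ≤
      ((⊥ : Ideal (MonoidAlgebra k G)).jacobson).restrictScalars k := by
  haveI : Module.Finite k (MonoidAlgebra k ↥N) := inferInstance
  haveI : IsArtinian (MonoidAlgebra k ↥N) (MonoidAlgebra k ↥N) :=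
    isArtinian_of_tower k inferInstance
  obtain ⟨n, hnpos, hJn⟩ := jac_nilpotent (A := MonoidAlgebra k ↥N)
  obtain ⟨m, rfl⟩ := Nat.exists_eq_succ_of_ne_zero (Nat.pos_iff_ne_zero.mp hnpos)
  have hJrad : Jrad k G N ^ (m+1) = ⊥ := by
    rw [Jrad_pow, hJn, Submodule.restrictScalars_bot]
  have hRimg : Rimg k G N ^ (m+1) = ⊥ := by
    have hR : Rimg k G N = Submodule.map (incl k G N).toLinearMap (Jrad k G N) := by
      rw [Rimg, Rpow, pow_one]
    rw [hR, ← Submodule.map_pow, hJrad, Submodule.map_bot]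
  have hIle : Igen k G N ^ (m+1) = ⊥ := by
    apply le_bot_iff.mp
    calc Igen k G N ^ (m+1) ≤ ⊤ * Rimg k G N ^ (m+1) * ⊤ := TRT_pow (Rimg_mul_top k G N) m
    _ = ⊥ := by rw [hRimg, Submodule.mul_bot, Submodule.bot_mul]
  refine ⟨⟨m+1, hIle⟩, ?_⟩
  intro x hx
  show x ∈ ((⊥ : Ideal (MonoidAlgebra k G)).jacobson)
  rw [Ideal.mem_jacobson_iff]
  intro y
  have hyx : y * x ∈ Igen k G N := by
    have h1 : y * x ∈ ⊤ * Igen k G N := Submodule.mul_mem_mul Submodule.mem_top hx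
    have hTI : ⊤ * Igen k G N = Igen k G N := by
      rw [Igen, ← mul_assoc, ← mul_assoc, top_mul_top]
    rwa [hTI] at h1
  have hnil : IsNilpotent (y * x) := ⟨m+1, by
    have h2 := Submodule.pow_mem_pow _ hyx (m+1)
    rw [hIle] at h2
    simpa using h2⟩
  have hu : IsUnit (y * x + 1) := hnil.isUnit_add_one
  refine ⟨(hu.unit⁻¹ : Units _), ?_⟩
  rw [Ideal.mem_bot, mul_assoc, ← mul_add_one (↑hu.unit⁻¹ : MonoidAlgebra k G) (y * x),
    hu.val_inv_mul, sub_self]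

end
end
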